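/- Let h ∈ ℝ^n, let T₀ ⊆ {1,…,n}, let k be a positive integer, and let T₁, T₂, …, T_M be a partition of T₀ᶜ such that |T_j| = k for all j < M, |T_M| ≤ k, and for every j ≥ 2, every u ∈ T_j and every v ∈ T_{j−1} satisfy |h_u| ≤ |h_v|. Then Σ_{j=2}^M ‖h_{T_j}‖₂ ≤ k^{−1/2}‖h_{T₀ᶜ}‖₁. -/
import Mathlib


open Finset

/-- The restriction of a vector to a set of indices: agrees with `x` on `S`, zero elsewhere. -/
noncomputable def restr {n : ℕ} (x : Fin n → ℝ) (S : Finset (Fin n)) : Fin n → ℝ :=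
  fun i => if i ∈ S then x i else 0

/-- The ℓ1 norm of a vector in ℝ^n. -/
noncomputable def nrm1 {n : ℕ} (x : Fin n → ℝ) : ℝ := ∑ i, |x i|

/-- The ℓ2 (Euclidean) norm of a vector in ℝ^n. -/
noncomputable def nrm2 {n : ℕ} (x : Fin n → ℝ) : ℝ := Real.sqrt (∑ i, (x i) ^ 2)

/-- The weighted ℓ1 norm associated with support-estimate sets `T 1, …, T N`
(with weights `w 1, …, w N`), where weight `1` is used off `⋃ i, T i`. -/
noncomputable def wl1 {n : ℕ} (N : ℕ) (T : ℕ → Finset (Fin n)) (w : ℕ → ℝ)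
    (x : Fin n → ℝ) : ℝ :=
  ∑ i ∈ Finset.Icc 1 N, w i * nrm1 (restr x (T i)) +
    nrm1 (restr x ((Finset.Icc 1 N).biUnion T)ᶜ)

/-- `A` satisfies the restricted isometry bound with constant `δ` at sparsity level `k`. -/
def RIPBound {m n : ℕ} (A : Matrix (Fin m) (Fin n) ℝ) (δ : ℝ) (k : ℕ) : Prop :=
  ∀ v : Fin n → ℝ, (Finset.univ.filter fun i => v i ≠ 0).card ≤ k →
    (1 - δ) * (nrm2 v) ^ 2 ≤ (nrm2 (A.mulVec v)) ^ 2 ∧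
      (nrm2 (A.mulVec v)) ^ 2 ≤ (1 + δ) * (nrm2 v) ^ 2

/-- The constant `K_N` appearing in the multi-weight recovery guarantee. -/
noncomputable def KN (N : ℕ) (w ρ α : ℕ → ℝ) : ℝ :=
  w N + (1 - w 1) * Real.sqrt (1 + ∑ i ∈ Finset.Icc 1 N, (ρ i - 2 * α i * ρ i)) +
    ∑ j ∈ Finset.Icc 2 N, (w (j - 1) - w j) *
      Real.sqrt (1 + ∑ i ∈ Finset.Icc j N, (ρ i - 2 * α i * ρ i))

/-- The quantity `D` appearing in the multi-weight error bounds. -/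
noncomputable def DD {n : ℕ} (N : ℕ) (T : ℕ → Finset (Fin n)) (T₀ : Finset (Fin n))
    (w : ℕ → ℝ) (x : Fin n → ℝ) : ℝ :=
  (∑ i ∈ Finset.Icc 1 N, w i) * nrm1 (restr x T₀ᶜ) +
    (1 - ∑ i ∈ Finset.Icc 1 N, w i) *
      nrm1 (restr x (((Finset.Icc 1 N).biUnion T)ᶜ ∩ T₀ᶜ)) -
    ∑ i ∈ Finset.Icc 1 N, (∑ j ∈ (Finset.Icc 1 N).erase i, w j) *
      nrm1 (restr x (T i ∩ T₀ᶜ))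

/-- The set `S_j = (T₀ ∪ ⋃_{i=j}^N T̃ᵢ) \ ⋃_{i=j}^N (T̃ᵢ ∩ T₀)`. -/
def SS {n : ℕ} (N : ℕ) (T : ℕ → Finset (Fin n)) (T₀ : Finset (Fin n)) (j : ℕ) :
    Finset (Fin n) :=
  (T₀ ∪ (Finset.Icc j N).biUnion T) \ (Finset.Icc j N).biUnion (fun i => T i ∩ T₀)


lemma nrm1_restr {n : ℕ} (h : Fin n → ℝ) (S : Finset (Fin n)) :
    nrm1 (restr h S) = ∑ i ∈ S, |h i| := by
  simp [nrm1, restr, apply_ite abs, Finset.sum_ite_mem]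

lemma nrm2_restr {n : ℕ} (h : Fin n → ℝ) (S : Finset (Fin n)) :
    nrm2 (restr h S) = Real.sqrt (∑ i ∈ S, (h i) ^ 2) := by
  simp [nrm2, restr, apply_ite (· ^ 2), Finset.sum_ite_mem]

/-- summing the block-sorting bounds over the tail blocks. -/
theorem tail_blocks_bound
    {n : ℕ} (h : Fin n → ℝ) (T₀ : Finset (Fin n))
    (k M : ℕ) (hk : 0 < k) (Tb : ℕ → Finset (Fin n))
    (hTbdisj : ∀ i ∈ Finset.Icc 1 M, ∀ j ∈ Finset.Icc 1 M, i ≠ j → Disjoint (Tb i) (Tb j))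
    (hTbcover : (Finset.Icc 1 M).biUnion Tb = T₀ᶜ)
    (hTbcard : ∀ j, 1 ≤ j → j < M → (Tb j).card = k)
    (hTblast : (Tb M).card ≤ k)
    (hTbsorted : ∀ j, 2 ≤ j → j ≤ M → ∀ u ∈ Tb j, ∀ v ∈ Tb (j - 1), |h u| ≤ |h v|) :
    ∑ j ∈ Finset.Icc 2 M, nrm2 (restr h (Tb j)) ≤
      (Real.sqrt (k : ℝ))⁻¹ * nrm1 (restr h T₀ᶜ) := by
  have hk' : (0:ℝ) < k := Nat.cast_pos.mpr hk
  have hsk : (0:ℝ) < Real.sqrt k := Real.sqrt_pos.mpr hk'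
  have key : ∀ j ∈ Finset.Icc 2 M, nrm2 (restr h (Tb j)) ≤
      (Real.sqrt (k:ℝ))⁻¹ * nrm1 (restr h (Tb (j-1))) := by
    intro j hj
    rw [Finset.mem_Icc] at hj
    obtain ⟨hj2, hjM⟩ := hj
    have hcard : (Tb (j-1)).card = k := hTbcard (j-1) (by omega) (by omega)
    set S := ∑ v ∈ Tb (j-1), |h v| with hS
    have hSnn : 0 ≤ S := Finset.sum_nonneg fun v _ => abs_nonneg _
    have hub : ∀ u ∈ Tb j, |h u| ≤ S / k := by
      intro u hu
      rw [le_div_iff₀ hk']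
      calc |h u| * k = ∑ _v ∈ Tb (j-1), |h u| := by
            simp [Finset.sum_const, hcard, nsmul_eq_mul, mul_comm]
        _ ≤ S := Finset.sum_le_sum fun v hv => hTbsorted j hj2 hjM u hu v hv
    have hcj : ((Tb j).card : ℝ) ≤ k := by
      rcases eq_or_lt_of_le hjM with rfl | hlt
      · exact_mod_cast hTblast
      · exact_mod_cast le_of_eq (hTbcard j (by omega) hlt)
    have hsq : ∑ u ∈ Tb j, (h u)^2 ≤ k * (S/k)^2 := by
      calc ∑ u ∈ Tb j, (h u)^2 ≤ ∑ _u ∈ Tb j, (S/k)^2 := by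
            apply Finset.sum_le_sum
            intro u hu
            have h1 := hub u hu
            nlinarith [abs_nonneg (h u), sq_abs (h u)]
        _ = ((Tb j).card : ℝ) * (S/k)^2 := by simp [Finset.sum_const, nsmul_eq_mul]
        _ ≤ k * (S/k)^2 := mul_le_mul_of_nonneg_right hcj (sq_nonneg _)
    rw [nrm2_restr, nrm1_restr, ← hS]
    calc Real.sqrt (∑ u ∈ Tb j, (h u)^2) ≤ Real.sqrt ((k:ℝ) * (S/k)^2) :=
          Real.sqrt_le_sqrt hsq
      _ = Real.sqrt k * (S/k) := by
          rw [Real.sqrt_mul (le_of_lt hk'), Real.sqrt_sq (by positivity)]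
      _ = (Real.sqrt (k:ℝ))⁻¹ * S := by
          have h2 : Real.sqrt (k:ℝ) * Real.sqrt (k:ℝ) = (k:ℝ) := Real.mul_self_sqrt hk'.le
          field_simp
          nlinarith [hsk]
  have hnonneg : ∀ j, 0 ≤ nrm1 (restr h (Tb j)) := fun j => by
    rw [nrm1_restr]; exact Finset.sum_nonneg fun _ _ => abs_nonneg _
  calc ∑ j ∈ Finset.Icc 2 M, nrm2 (restr h (Tb j))
      ≤ ∑ j ∈ Finset.Icc 2 M, (Real.sqrt (k:ℝ))⁻¹ * nrm1 (restr h (Tb (j-1))) :=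
        Finset.sum_le_sum key
    _ = (Real.sqrt (k:ℝ))⁻¹ * ∑ j ∈ Finset.Icc 2 M, nrm1 (restr h (Tb (j-1))) := by
        rw [Finset.mul_sum]
    _ ≤ (Real.sqrt (k:ℝ))⁻¹ * nrm1 (restr h T₀ᶜ) := by
        apply mul_le_mul_of_nonneg_left _ (inv_nonneg.mpr (Real.sqrt_nonneg _))
        have hinj : ∀ a ∈ Finset.Icc 2 M, ∀ b ∈ Finset.Icc 2 M, a - 1 = b - 1 → a = b := by
          intro a ha b hb hab
          simp only [Finset.mem_Icc] at ha hb
          omega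
        rw [← Finset.sum_image (g := fun j => j - 1) (f := fun j => nrm1 (restr h (Tb j))) hinj]
        have hsub : (Finset.Icc 2 M).image (· - 1) ⊆ Finset.Icc 1 M := by
          intro a ha
          simp only [Finset.mem_image, Finset.mem_Icc] at ha ⊢
          obtain ⟨b, hb, rfl⟩ := ha
          omega
        calc ∑ j ∈ (Finset.Icc 2 M).image (· - 1), nrm1 (restr h (Tb j))
            ≤ ∑ j ∈ Finset.Icc 1 M, nrm1 (restr h (Tb j)) :=
              Finset.sum_le_sum_of_subset_of_nonneg hsub (fun j _ _ => hnonneg j)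
          _ = nrm1 (restr h T₀ᶜ) := by
              rw [nrm1_restr, ← hTbcover, Finset.sum_biUnion]
              · exact Finset.sum_congr rfl fun j _ => nrm1_restr h (Tb j)
              · exact fun i hi j hj hij => hTbdisj i hi j hj hij
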